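/- For every natural number n ≥ 1, ∑_{j=1}^{n} j·H_{j−1}·H_{n+1−j} = ((n+2)/2)·∑_{j=1}^{n} H_j·H_{n−j}, where H_k is the k-th harmonic number with H_0 = 0. -/

import Mathlib

open Finset

noncomputable def H (n : ℕ) : ℝ := ∑ i ∈ Finset.Icc 1 n, (1:ℝ)/i
noncomputable def H2 (n : ℕ) : ℝ := ∑ i ∈ Finset.Icc 1 n, (1:ℝ)/(i:ℝ)^2

lemma H_zero : H 0 = 0 := by simp [H]

lemma H_succ (n : ℕ) : H (n+1) = H n + 1/((n:ℝ)+1) := by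
  rw [H, H, Finset.sum_Icc_succ_top (by omega)]
  push_cast
  ring

lemma H2_succ (n : ℕ) : H2 (n+1) = H2 n + 1/((n:ℝ)+1)^2 := by
  rw [H2, H2, Finset.sum_Icc_succ_top (by omega)]
  push_cast
  ring

lemma Icc_range (m : ℕ) (f : ℕ → ℝ) : ∑ j ∈ Icc 1 m, f j = ∑ i ∈ range m, f (i+1) := by
  refine Finset.sum_nbij' (fun j => j - 1) (fun i => i + 1) ?_ ?_ ?_ ?_ ?_ <;>
    simp only [mem_Icc, mem_range] <;> intros <;> first | omega | (congr 1; omega)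

lemma sum_Icc_reflect (m : ℕ) (f : ℕ → ℝ) :
    ∑ j ∈ Icc 1 m, f (m+1-j) = ∑ j ∈ Icc 1 m, f j := by
  rw [Icc_range m (fun j => f (m+1-j)), Icc_range m f]
  rw [← Finset.sum_range_reflect (fun i => f (i+1))]
  apply Finset.sum_congr rfl
  intro i hi
  rw [Finset.mem_range] at hi

  congr 1
  omega

lemma sumH (m : ℕ) : ∑ j ∈ Icc 1 m, H (j-1) = (m:ℝ) * H m - m := by
  induction m with
  | zero => simp [H]
  | succ m ih =>
    rw [Finset.sum_Icc_succ_top (by omega), ih]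
    have e : m + 1 - 1 = m := rfl
    rw [e, H_succ]
    have h1 : (m:ℝ) + 1 ≠ 0 := by positivity
    push_cast
    field_simp
    ring

lemma reflH (m : ℕ) : ∑ j ∈ Icc 1 m, (1:ℝ)/(((m-j:ℕ):ℝ)+1) = H m := by
  have h := sum_Icc_reflect m (fun j => (1:ℝ)/j)
  rw [H, ← h]
  apply Finset.sum_congr rfl
  intro j hj
  rw [mem_Icc] at hj
  have e : ((m+1-j:ℕ):ℝ) = ((m-j:ℕ):ℝ) + 1 := by
    have : m+1-j = (m-j)+1 := by omega
    rw [this]; push_cast; ring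
  rw [e]

lemma pf (m : ℕ) : ∑ j ∈ Icc 1 m, 1/((j:ℝ)*(((m-j:ℕ):ℝ)+1)) = 2 * H m / ((m:ℝ)+1) := by
  have step : ∑ j ∈ Icc 1 m, 1/((j:ℝ)*(((m-j:ℕ):ℝ)+1))
      = ∑ j ∈ Icc 1 m, (1/((m:ℝ)+1)) * ((1:ℝ)/j + 1/(((m-j:ℕ):ℝ)+1)) := by
    apply Finset.sum_congr rfl
    intro j hj
    rw [mem_Icc] at hj
    have hd : ((m-j:ℕ):ℝ) = (m:ℝ) - (j:ℝ) := by
      push_cast [Nat.cast_sub hj.2]; ring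
    rw [hd]
    have h1 : (j:ℝ) ≠ 0 := by
      have : 0 < j := hj.1
      positivity
    have h2 : (m:ℝ) - j + 1 ≠ 0 := by
      have hj2 : (j:ℝ) ≤ m := by exact_mod_cast hj.2
      nlinarith
    have h3 : (m:ℝ) + 1 ≠ 0 := by positivity
    field_simp
    ring
  rw [step, ← Finset.mul_sum, Finset.sum_add_distrib, reflH]
  rw [show (∑ j ∈ Icc 1 m, (1:ℝ)/j) = H m from rfl]
  ring

lemma sumG (m : ℕ) : ∑ j ∈ Icc 1 m, H (m-j) / (j:ℝ) = (H m)^2 - H2 m := by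
  induction m with
  | zero => simp [H, H2]
  | succ m ih =>
    rw [Finset.sum_Icc_succ_top (by omega)]
    have e0 : m + 1 - (m+1) = 0 := by omega
    rw [e0, H_zero]
    have key : ∑ j ∈ Icc 1 m, H (m+1-j) / (j:ℝ)
        = ∑ j ∈ Icc 1 m, (H (m-j) / (j:ℝ) + 1/((j:ℝ)*(((m-j:ℕ):ℝ)+1))) := by
      apply Finset.sum_congr rfl
      intro j hj
      rw [mem_Icc] at hj
      have e : m+1-j = (m-j)+1 := by omega
      rw [e, H_succ]
      have h1 : (j:ℝ) ≠ 0 := by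
        have : 0 < j := hj.1
        positivity
      have h2 : ((m-j:ℕ):ℝ) + 1 ≠ 0 := by positivity
      field_simp
    rw [key, Finset.sum_add_distrib, ih, pf, H_succ, H2_succ]
    have h3 : (m:ℝ) + 1 ≠ 0 := by positivity
    field_simp
    ring

lemma sumS (n : ℕ) : ∑ j ∈ Icc 1 n, H j * H (n-j)
    = ((n:ℝ)+1)*((H (n+1))^2 - H2 (n+1)) - 2*((n:ℝ)+1)*(H (n+1) - 1) := by
  induction n with
  | zero => simp [H, H2]
  | succ n ih =>
    have split : ∑ j ∈ Icc 1 (n+1), H j * H (n+1-j)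
        = ∑ j ∈ Icc 1 (n+1), (H (j-1) * H (n+1-j) + H (n+1-j) / (j:ℝ)) := by
      apply Finset.sum_congr rfl
      intro j hj
      rw [mem_Icc] at hj
      have e : j = (j-1)+1 := by omega
      have e2 : ((((j:ℕ)-1:ℕ)):ℝ) + 1 = (j:ℝ) := by
        have : ((j-1:ℕ):ℝ) = (j:ℝ) - 1 := by
          push_cast [Nat.cast_sub hj.1]; ring
        rw [this]; ring
      conv_lhs => rw [e, H_succ]
      rw [e2]
      have e3 : n + 1 - (j - 1 + 1) = n + 1 - j := by omega
      rw [e3]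
      have h1 : (j:ℝ) ≠ 0 := by
        have : 0 < j := hj.1
        positivity
      field_simp
    rw [split, Finset.sum_add_distrib, sumG]
    have first : ∑ j ∈ Icc 1 (n+1), H (j-1) * H (n+1-j)
        = ∑ j ∈ Icc 1 n, H j * H (n-j) := by
      rw [Icc_range (n+1) (fun j => H (j-1) * H (n+1-j)), Icc_range n (fun j => H j * H (n-j)),
        Finset.sum_range_succ']
      have e6 : H (0 + 1 - 1) * H (n+1-(0+1)) = 0 := by
        norm_num [H_zero]

      rw [e6, add_zero]
      apply Finset.sum_congr rfl
      intro i hi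
      rw [Finset.mem_range] at hi
      have a1 : i + 1 + 1 - 1 = i + 1 := by omega
      have a2 : n + 1 - (i + 1 + 1) = n - (i+1) := by omega
      rw [a1, a2]
    rw [first, ih, H_succ (n+1), H2_succ (n+1)]
    have h3 : (n:ℝ) + 1 ≠ 0 := by positivity
    have h4 : (n:ℝ) + 2 ≠ 0 := by positivity
    push_cast
    field_simp
    ring

lemma sumW (m : ℕ) : ∑ j ∈ Icc 1 m, (j:ℝ) * H (j-1) / (((m-j:ℕ):ℝ)+1)
    = ((m:ℝ)+1)*((H m)^2 - H2 m) - (m:ℝ)*H m + m := by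
  have step : ∑ j ∈ Icc 1 m, (j:ℝ) * H (j-1) / (((m-j:ℕ):ℝ)+1)
      = ∑ j ∈ Icc 1 m, (((m:ℝ)+1) * (H (j-1) / (((m-j:ℕ):ℝ)+1)) - H (j-1)) := by
    apply Finset.sum_congr rfl
    intro j hj
    rw [mem_Icc] at hj
    have hd : ((m-j:ℕ):ℝ) = (m:ℝ) - (j:ℝ) := by
      push_cast [Nat.cast_sub hj.2]; ring
    rw [hd]
    have hj2 : (j:ℝ) ≤ m := by exact_mod_cast hj.2
    have h2 : (m:ℝ) - j + 1 ≠ 0 := by nlinarith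
    field_simp
    ring
  rw [step, Finset.sum_sub_distrib, ← Finset.mul_sum, sumH]
  have refl : ∑ j ∈ Icc 1 m, H (j-1) / (((m-j:ℕ):ℝ)+1)
      = ∑ j ∈ Icc 1 m, H (m-j) / (j:ℝ) := by
    have h := sum_Icc_reflect m (fun j => H (m-j) / (j:ℝ))
    rw [← h]
    apply Finset.sum_congr rfl
    intro j hj
    rw [mem_Icc] at hj
    have a1 : m - (m+1-j) = j - 1 := by omega
    have a2 : ((m+1-j:ℕ):ℝ) = ((m-j:ℕ):ℝ) + 1 := by
      have : m+1-j = (m-j)+1 := by omega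
      rw [this]; push_cast; ring
    rw [a1, a2]
  rw [refl, sumG]
  ring

lemma sumA (n : ℕ) : ∑ j ∈ Icc 1 n, (j:ℝ) * H (j-1) * H (n+1-j)
    = (((n:ℝ)+2)/2) * (((n:ℝ)+1)*((H (n+1))^2 - H2 (n+1)) - 2*((n:ℝ)+1)*(H (n+1) - 1)) := by
  induction n with
  | zero => simp [H, H2]
  | succ n ih =>
    have split : ∑ j ∈ Icc 1 (n+1), (j:ℝ) * H (j-1) * H (n+1+1-j)
        = ∑ j ∈ Icc 1 (n+1), ((j:ℝ) * H (j-1) * H (n+1-j)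
            + (j:ℝ) * H (j-1) / (((n+1-j:ℕ):ℝ)+1)) := by
      apply Finset.sum_congr rfl
      intro j hj
      rw [mem_Icc] at hj
      have e : n+1+1-j = (n+1-j)+1 := by omega
      rw [e, H_succ]
      have h2 : ((n+1-j:ℕ):ℝ) + 1 ≠ 0 := by positivity
      field_simp
    rw [split, Finset.sum_add_distrib, sumW (n+1)]
    have first : ∑ j ∈ Icc 1 (n+1), (j:ℝ) * H (j-1) * H (n+1-j)
        = ∑ j ∈ Icc 1 n, (j:ℝ) * H (j-1) * H (n+1-j) := by
      rw [Finset.sum_Icc_succ_top (by omega)]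
      have e0 : n + 1 - (n+1) = 0 := by omega
      rw [e0, H_zero]
      ring
    rw [first, ih, H_succ (n+1), H2_succ (n+1)]
    have h3 : (n:ℝ) + 1 ≠ 0 := by positivity
    have h4 : (n:ℝ) + 2 ≠ 0 := by positivity
    push_cast
    field_simp
    ring

theorem stmt18 (n : ℕ) (hn : 1 ≤ n) :
    ∑ j ∈ Icc 1 n, (j:ℝ) * H (j-1) * H (n+1-j)
      = (((n:ℝ)+2)/2) * ∑ j ∈ Icc 1 n, H j * H (n-j) := by
  rw [sumA, sumS]
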